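/- Group incentive ratio lower bound for Round-Robin: for every coalition size c ≥ 1 and every ε > 0, there exist a number of agents n, a number of indivisible goods m, additive valuations v_1, …, v_n, a profile of strict orderings ≻ with v_a consistent with ≻_a for every a, a coalition C ⊆ [n] with |C| = c, and manipulated orderings ≻'_C, such that for every corrupted agent a ∈ C it holds that v_a(RR_a(≻)) > 0 and v_a(RR_a(≻'_C, ≻_{−C})) ≥ (c + 1 − ε)·v_a(RR_a(≻)). In particular, GIR_RR(c) ≥ c + 1. -/

import Mathlib

/-- A strict total ordering over goods, given as a list from most preferred to
least preferred: it must be a duplicate-free enumeration of all goods. -/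
def IsOrder {γ : Type*} [Fintype γ] (l : List γ) : Prop :=
  l.Nodup ∧ ∀ g : γ, g ∈ l

/-- An additive valuation `v` (given by its values on single goods) is consistent
with the strict ordering `l` if strictly more valuable goods appear earlier. -/
def Consistent {γ : Type*} [DecidableEq γ] (v : γ → ℝ) (l : List γ) : Prop :=
  ∀ g g' : γ, v g > v g' → l.idxOf g < l.idxOf g'

/-- State of Round-Robin after `s` stages: the set of remaining goods, together
with the bundle picked so far by each agent.  At stage `s` (0-indexed), agent
`s % n` picks his most preferred remaining good. -/
def rrState {γ : Type*} [DecidableEq γ] [Fintype γ] (n : ℕ) (hn : 0 < n)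
    (pref : Fin n → List γ) : ℕ → Finset γ × (Fin n → Finset γ)
  | 0 => (Finset.univ, fun _ => ∅)
  | s + 1 =>
    let st := rrState n hn pref s
    let agent : Fin n := ⟨s % n, Nat.mod_lt s hn⟩
    match (pref agent).find? (fun g => decide (g ∈ st.1)) with
    | none => st
    | some g => (st.1.erase g, Function.update st.2 agent (insert g (st.2 agent)))

/-- The Round-Robin allocation: the bundle of agent `a` after all goods are picked. -/
def rr {γ : Type*} [DecidableEq γ] [Fintype γ] (n : ℕ) (hn : 0 < n)
    (pref : Fin n → List γ) (a : Fin n) : Finset γ :=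
  (rrState n hn pref (Fintype.card γ)).2 a

section Generic

variable {γ : Type*} [DecidableEq γ] [Fintype γ] {n : ℕ} (hn : 0 < n)
  (pref : Fin n → List γ)

/-- bundles only grow -/
lemma rrState_bundle_mono_step (s : ℕ) (a : Fin n) :
    (rrState n hn pref s).2 a ⊆ (rrState n hn pref (s+1)).2 a := by
  rw [rrState]
  cases hfind : (pref ⟨s % n, Nat.mod_lt s hn⟩).find?
      (fun g => decide (g ∈ (rrState n hn pref s).1)) with
  | none => simp [hfind]
  | some g =>
      simp only [hfind]
      by_cases ha : a = ⟨s % n, Nat.mod_lt s hn⟩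
      · subst ha; rw [Function.update_self]; exact Finset.subset_insert _ _
      · rw [Function.update_of_ne ha]

lemma rrState_bundle_mono (s t : ℕ) (hst : s ≤ t) (a : Fin n) :
    (rrState n hn pref s).2 a ⊆ (rrState n hn pref t).2 a := by
  induction t with
  | zero => simp_all
  | succ t ih =>
      rcases Nat.lt_or_ge s (t+1) with h | h
      · exact (ih (Nat.lt_succ_iff.mp h)).trans (rrState_bundle_mono_step hn pref t a)
      · have : s = t + 1 := le_antisymm hst h
        subst this; rfl

/-- The key closed-form lemma: if `σ` is a valid "schedule" up to stage `S`
(at each stage the scheduled good is the first available one in the picker's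
list), then `rrState` is given in closed form. -/
lemma rrState_scheduled (σ : ℕ → γ) (S : ℕ)
    (hdom : ∀ s < S, ∃ l₁ l₂, pref ⟨s % n, Nat.mod_lt s hn⟩ = l₁ ++ σ s :: l₂ ∧
      (∀ g ∈ l₁, ∃ s' < s, σ s' = g) ∧ (∀ s' < s, σ s' ≠ σ s)) :
    ∀ s ≤ S, (rrState n hn pref s).1 = Finset.univ \ (Finset.range s).image σ ∧
      ∀ a : Fin n, (rrState n hn pref s).2 a =
        ((Finset.range s).filter (fun t => t % n = a.val)).image σ := by
  intro s
  induction s with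
  | zero => intro _; simp [rrState]
  | succ s ih =>
      intro hS
      have hs : s < S := Nat.lt_of_succ_le hS
      obtain ⟨hrem, hbun⟩ := ih (le_of_lt hs)
      obtain ⟨l₁, l₂, hsplit, hcons, hfresh⟩ := hdom s hs
      have hfind : (pref ⟨s % n, Nat.mod_lt s hn⟩).find?
          (fun g => decide (g ∈ (rrState n hn pref s).1)) = some (σ s) := by
        rw [hsplit, List.find?_append]
        have h1 : (l₁.find? fun g => decide (g ∈ (rrState n hn pref s).1)) = none := by
          rw [List.find?_eq_none]
          intro g hg
          obtain ⟨s', hs', hgs'⟩ := hcons g hg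
          simp only [decide_eq_true_eq, hrem, Finset.mem_sdiff, Finset.mem_univ, true_and,
            not_not]
          exact Finset.mem_image.mpr ⟨s', Finset.mem_range.mpr hs', hgs'⟩
        rw [h1, Option.none_or]
        apply List.find?_cons_of_pos
        simp only [decide_eq_true_eq, hrem, Finset.mem_sdiff, Finset.mem_univ, true_and]
        intro hmem
        obtain ⟨s', hs', hgs'⟩ := Finset.mem_image.mp hmem
        exact hfresh s' (Finset.mem_range.mp hs') hgs'
      rw [rrState]
      simp only [hfind]
      constructor
      · rw [hrem]
        ext g
        simp only [Finset.mem_erase, Finset.mem_sdiff, Finset.mem_univ, true_and,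
          Finset.mem_image, Finset.mem_range, Nat.lt_succ_iff_lt_or_eq]
        constructor
        · rintro ⟨hne, hno⟩ ⟨t, ht | rfl, hgt⟩
          · exact hno ⟨t, ht, hgt⟩
          · exact hne hgt.symm
        · intro hno
          constructor
          · intro h; exact hno ⟨s, Or.inr rfl, h.symm⟩
          · rintro ⟨t, ht, hgt⟩; exact hno ⟨t, Or.inl ht, hgt⟩
      · intro a
        by_cases ha : a = (⟨s % n, Nat.mod_lt s hn⟩ : Fin n)
        · subst ha
          rw [Function.update_self, hbun]
          ext g
          simp only [Finset.mem_insert, Finset.mem_image, Finset.mem_filter,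
            Finset.mem_range, Nat.lt_succ_iff_lt_or_eq]
          constructor
          · rintro (rfl | ⟨t, ⟨ht, hta⟩, hgt⟩)
            · exact ⟨s, ⟨Or.inr rfl, rfl⟩, rfl⟩
            · exact ⟨t, ⟨Or.inl ht, hta⟩, hgt⟩
          · rintro ⟨t, ⟨ht | rfl, hta⟩, hgt⟩
            · exact Or.inr ⟨t, ⟨ht, hta⟩, hgt⟩
            · exact Or.inl hgt.symm
        · rw [Function.update_of_ne ha, hbun]
          congr 1
          ext t
          simp only [Finset.mem_filter, Finset.mem_range]
          constructor
          · rintro ⟨ht, hta⟩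
            exact ⟨Nat.lt_succ_of_lt ht, hta⟩
          · rintro ⟨ht, hta⟩
            refine ⟨?_, hta⟩
            rcases Nat.lt_succ_iff_lt_or_eq.mp ht with h | h
            · exact h
            · subst h
              exact absurd (Fin.ext hta.symm) ha

end Generic

set_option linter.unusedSectionVars false
set_option linter.unusedVariables false

namespace S17

/-! ### Parameters and encodings -/

-- c : number of coalition members; D : scale factor
def K (c D : ℕ) : ℕ := D ^ c                 -- largest window
def nn (c D : ℕ) : ℕ := c + c * K c D        -- number of agents
def RR (c D : ℕ) : ℕ := (c + 2) * K c D      -- number of rounds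
def mm (c D : ℕ) : ℕ := RR c D * nn c D      -- number of goods
def W (c D : ℕ) : ℕ := (c + 1) * K c D       -- scheduled manip horizon (rounds)
def Ki (D i : ℕ) : ℕ := D ^ (i + 1)          -- window of member i
def low (D i : ℕ) : ℕ := if i = 0 then 0 else D ^ i
def mu (c D i : ℕ) : ℕ := Ki D i + c * (Ki D i - low D i)
def lvl (D w : ℕ) : ℕ := Nat.log D w
def Hag (c D i w : ℕ) : ℕ := c + i * K c D + w   -- honest agent (i, w)
def gd (c D w a : ℕ) : ℕ := w * nn c D + a       -- good picked truthfully by a at round w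

section Facts
variable {c D : ℕ}

lemma hD1 (hD : 2 ≤ D) : 1 ≤ D := le_trans (by norm_num) hD
lemma K_pos (hD : 2 ≤ D) : 0 < K c D := Nat.pow_pos (by omega)
lemma Ki_pos (hD : 2 ≤ D) (i : ℕ) : 0 < Ki D i := Nat.pow_pos (by omega)
lemma nn_pos (hc : 1 ≤ c) : 0 < nn c D := lt_of_lt_of_le hc (Nat.le_add_right _ _)
lemma Ki_le_K (hD : 2 ≤ D) {i : ℕ} (hi : i < c) : Ki D i ≤ K c D :=
  Nat.pow_le_pow_right (hD1 hD) hi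
lemma low_le_Ki (hD : 2 ≤ D) (i : ℕ) : low D i ≤ Ki D i := by
  unfold low Ki
  split
  · exact Nat.zero_le _
  · exact Nat.pow_le_pow_right (hD1 hD) (Nat.le_succ _)
lemma K_lt_RR (hD : 2 ≤ D) : K c D < RR c D := by
  have := K_pos (c := c) hD
  unfold RR
  nlinarith
lemma mu_le_W (hD : 2 ≤ D) {i : ℕ} (hi : i < c) : mu c D i ≤ W c D := by
  have h1 : Ki D i - low D i ≤ Ki D i := Nat.sub_le _ _
  have h2 : Ki D i ≤ K c D := Ki_le_K hD hi
  unfold mu W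
  nlinarith
lemma W_lt_RR (hD : 2 ≤ D) : W c D < RR c D := by
  have := K_pos (c := c) hD
  unfold W RR
  nlinarith
lemma mm_pos (hc : 1 ≤ c) (hD : 2 ≤ D) : 0 < mm c D :=
  Nat.mul_pos (lt_of_le_of_lt (Nat.zero_le _) (K_lt_RR hD)) (nn_pos hc)
lemma Wnn_le_mm (hD : 2 ≤ D) : W c D * nn c D ≤ mm c D :=
  Nat.mul_le_mul_right _ (le_of_lt (W_lt_RR hD))

lemma Hag_lt_nn {i w : ℕ} (hi : i < c) (hw : w < K c D) : Hag c D i w < nn c D := by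
  have h : i * K c D + w < c * K c D := by
    calc i * K c D + w < i * K c D + K c D := by omega
    _ = (i+1) * K c D := by ring
    _ ≤ c * K c D := Nat.mul_le_mul_right _ hi
  unfold Hag nn
  omega
lemma Hag_ge_c (i w : ℕ) : c ≤ Hag c D i w := by unfold Hag; omega

lemma gd_lt_mm {w a : ℕ} (hw : w < RR c D) (ha : a < nn c D) : gd c D w a < mm c D := by
  unfold gd mm
  calc w * nn c D + a < w * nn c D + nn c D := by omega
  _ = (w+1) * nn c D := by ring
  _ ≤ RR c D * nn c D := Nat.mul_le_mul_right _ hw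

lemma gd_mod {w a : ℕ} (ha : a < nn c D) : gd c D w a % nn c D = a := by
  unfold gd
  rw [show w * nn c D + a = a + nn c D * w by ring, Nat.add_mul_mod_self_left,
    Nat.mod_eq_of_lt ha]
lemma gd_div {w a : ℕ} (hc : 1 ≤ c) (ha : a < nn c D) : gd c D w a / nn c D = w := by
  unfold gd
  rw [show w * nn c D + a = a + nn c D * w by ring,
    Nat.add_mul_div_left _ _ (nn_pos hc), Nat.div_eq_of_lt ha, Nat.zero_add]
lemma gd_inj {w a w' a' : ℕ} (hc : 1 ≤ c) (ha : a < nn c D) (ha' : a' < nn c D)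
    (h : gd c D w a = gd c D w' a') : w = w' ∧ a = a' := by
  have h1 : gd c D w a % nn c D = gd c D w' a' % nn c D := by rw [h]
  have h2 : gd c D w a / nn c D = gd c D w' a' / nn c D := by rw [h]
  rw [gd_mod ha, gd_mod ha'] at h1
  rw [gd_div hc ha, gd_div hc ha'] at h2
  exact ⟨h2, h1⟩

lemma stage_eq_gd {s : ℕ} : gd c D (s / nn c D) (s % nn c D) = s := by
  unfold gd
  rw [mul_comm]
  exact Nat.div_add_mod s (nn c D)
lemma stage_mod_lt (s : ℕ) (hc : 1 ≤ c) : s % nn c D < nn c D := Nat.mod_lt _ (nn_pos hc)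
lemma stage_div_lt {s X : ℕ} (hc : 1 ≤ c) (hs : s < X * nn c D) : s / nn c D < X :=
  (Nat.div_lt_iff_lt_mul (nn_pos hc)).mpr hs
lemma gd_mono_w {w w' a a' : ℕ} (ha : a < nn c D) (h : w < w') : gd c D w a < gd c D w' a' := by
  unfold gd
  calc w * nn c D + a < w * nn c D + nn c D := by omega
  _ = (w+1) * nn c D := by ring
  _ ≤ w' * nn c D := Nat.mul_le_mul_right _ h
  _ ≤ w' * nn c D + a' := Nat.le_add_right _ _
lemma gd_mono_a {w a a' : ℕ} (h : a < a') : gd c D w a < gd c D w a' := by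
  unfold gd; omega

/-! ### lvl facts -/

lemma lvl_lt_c {w : ℕ} (hc : 1 ≤ c) (hw : w < K c D) : lvl D w < c := by
  unfold lvl
  rcases Nat.eq_zero_or_pos w with rfl | hpos
  · simp only [Nat.log_zero_right]; omega
  · exact Nat.log_lt_of_lt_pow hpos.ne' hw
lemma lvl_lt_Ki (hD : 2 ≤ D) (w : ℕ) : w < Ki D (lvl D w) :=
  Nat.lt_pow_succ_log_self (by omega) w
lemma lvl_low_le (w : ℕ) : low D (lvl D w) ≤ w := by
  unfold low
  split
  · exact Nat.zero_le _
  · next h =>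
    rcases Nat.eq_zero_or_pos w with rfl | hpos
    · exact absurd (by simp [lvl, Nat.log_zero_right]) h
    · exact Nat.pow_log_le_self D hpos.ne'
lemma lvl_eq {i w : ℕ} (h1 : low D i ≤ w) (h2 : w < Ki D i) : lvl D w = i := by
  unfold lvl
  rcases Nat.eq_zero_or_pos i with rfl | hpos
  · rw [Nat.log_eq_zero_iff]
    left
    simpa [Ki] using h2
  · refine Nat.log_eq_of_pow_le_of_lt_pow ?_ h2
    unfold low at h1
    rwa [if_neg (by omega)] at h1

end Facts

/-! ### Valuations -/

def posi (c D i x : ℕ) : Prop :=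
  (x % nn c D = i ∧ x / nn c D < Ki D i) ∨
  (x % nn c D < c ∧ x / nn c D < K c D ∧ lvl D (x / nn c D) = i) ∨
  (x % nn c D = Hag c D i (x / nn c D) ∧ x / nn c D < Ki D i)

instance posiDec (c D i x : ℕ) : Decidable (posi c D i x) := by
  unfold posi; infer_instance

section Enc
variable (c D : ℕ) (hc : 1 ≤ c) (hD : 2 ≤ D)

def enc (x : ℕ) : Fin (mm c D) := ⟨x % mm c D, Nat.mod_lt _ (mm_pos hc hD)⟩

variable {c D}

lemma enc_val {x : ℕ} (hx : x < mm c D) : (enc c D hc hD x).val = x := by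
  simp [enc, Nat.mod_eq_of_lt hx]

lemma enc_inj {x y : ℕ} (hx : x < mm c D) (hy : y < mm c D)
    (h : enc c D hc hD x = enc c D hc hD y) : x = y := by
  have := congrArg Fin.val h
  rwa [enc_val hc hD hx, enc_val hc hD hy] at this

lemma enc_self (g : Fin (mm c D)) : enc c D hc hD g.val = g :=
  Fin.ext (enc_val hc hD g.isLt)

end Enc

def val (c D i : ℕ) (g : Fin (mm c D)) : ℝ := if posi c D i g.val then 1 else 0

lemma val_nonneg (c D i : ℕ) (g : Fin (mm c D)) : 0 ≤ val c D i g := by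
  unfold val; split <;> norm_num

/-! ### Lists (as lists of naturals) -/

def skipf (i r : ℕ) : ℕ := if r < i then r else r + 1

def A1 (c D i : ℕ) : List ℕ := (List.range (Ki D i)).map fun w => gd c D w i
def A2 (c D i : ℕ) : List ℕ := (List.range (Ki D i)).map fun w => gd c D w (Hag c D i w)
def A3 (c D i : ℕ) : List ℕ := (List.range ((c-1) * (Ki D i - low D i))).map
    fun t => gd c D (low D i + t / (c-1)) (skipf i (t % (c-1)))
def A4 (c D i : ℕ) : List ℕ := (List.range (RR c D - Ki D i)).map fun t => gd c D (Ki D i + t) i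
def B2 (c D i : ℕ) : List ℕ := (List.range (c * (Ki D i - low D i))).map
    fun t => gd c D (low D i + t / c) (t % c)
def B3 (c D i : ℕ) : List ℕ := (List.range (RR c D - K c D)).map fun t => gd c D (K c D + t) i
def Lhon (c D a : ℕ) : List ℕ := (List.range (RR c D)).map fun w => gd c D w a

def preT (c D a : ℕ) : List ℕ := if a < c then A1 c D a ++ A2 c D a ++ A3 c D a ++ A4 c D a
  else Lhon c D a
def preM (c D a : ℕ) : List ℕ := if a < c then A2 c D a ++ B2 c D a ++ B3 c D a else Lhon c D a

/-! ### Membership characterizations -/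

section Mem
variable {c D : ℕ} (hc : 1 ≤ c) (hD : 2 ≤ D)

lemma mem_A1 {i x : ℕ} : x ∈ A1 c D i ↔ ∃ w < Ki D i, x = gd c D w i := by
  simp [A1, eq_comm]
lemma mem_A2 {i x : ℕ} : x ∈ A2 c D i ↔ ∃ w < Ki D i, x = gd c D w (Hag c D i w) := by
  simp [A2, eq_comm]
lemma mem_A3 {i x : ℕ} : x ∈ A3 c D i ↔ ∃ t < (c-1) * (Ki D i - low D i),
    x = gd c D (low D i + t / (c-1)) (skipf i (t % (c-1))) := by
  simp [A3, eq_comm]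
lemma mem_A4 {i x : ℕ} : x ∈ A4 c D i ↔ ∃ t < RR c D - Ki D i, x = gd c D (Ki D i + t) i := by
  simp [A4, eq_comm]
lemma mem_B2 {i x : ℕ} : x ∈ B2 c D i ↔ ∃ t < c * (Ki D i - low D i),
    x = gd c D (low D i + t / c) (t % c) := by
  simp [B2, eq_comm]
lemma mem_B3 {i x : ℕ} : x ∈ B3 c D i ↔ ∃ t < RR c D - K c D, x = gd c D (K c D + t) i := by
  simp [B3, eq_comm]
lemma mem_Lhon {a x : ℕ} : x ∈ Lhon c D a ↔ ∃ w < RR c D, x = gd c D w a := by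
  simp [Lhon, eq_comm]

lemma skipf_lt {i r : ℕ} (hi : i < c) (hr : r < c - 1) : skipf i r < c := by
  unfold skipf; split <;> omega
lemma skipf_ne {i r : ℕ} : skipf i r ≠ i := by
  unfold skipf; split <;> omega

/-- elements of the designed truthful prefix of member `i` are `< mm` -/
lemma A3_w_facts {i t : ℕ} (hD : 2 ≤ D) (ht : t < (c-1) * (Ki D i - low D i)) :
    low D i ≤ low D i + t / (c-1) ∧ low D i + t / (c-1) < Ki D i := by
  have hc1 : 0 < c - 1 := by
    rcases Nat.eq_zero_or_pos (c-1) with h | h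
    · rw [h] at ht; omega
    · exact h
  constructor
  · exact Nat.le_add_right _ _
  · have h2 : t / (c-1) < Ki D i - low D i := (Nat.div_lt_iff_lt_mul hc1).mpr
      (by rw [mul_comm] at ht; exact ht)
    have h3 := low_le_Ki hD i
    omega

lemma B2_w_facts {i t : ℕ} (hc : 1 ≤ c) (hD : 2 ≤ D) (ht : t < c * (Ki D i - low D i)) :
    low D i ≤ low D i + t / c ∧ low D i + t / c < Ki D i := by
  constructor
  · exact Nat.le_add_right _ _
  · have h2 : t / c < Ki D i - low D i := (Nat.div_lt_iff_lt_mul hc).mpr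
      (by rw [mul_comm] at ht; exact ht)
    have h3 := low_le_Ki hD i
    omega

end Mem

/-! ### posi characterizations -/

section Posi
variable {c D : ℕ}

lemma gd_lt_mul {w a X : ℕ} (ha : a < nn c D) (hw : w < X) : gd c D w a < X * nn c D := by
  unfold gd
  calc w * nn c D + a < w * nn c D + nn c D := by omega
  _ = (w+1) * nn c D := by ring
  _ ≤ X * nn c D := Nat.mul_le_mul_right _ hw

lemma posi_gd_own (hc : 1 ≤ c) (hD : 2 ≤ D) {i w : ℕ} (hi : i < c) :
    posi c D i (gd c D w i) ↔ w < Ki D i := by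
  have hi' : i < nn c D := lt_of_lt_of_le hi (Nat.le_add_right _ _)
  unfold posi
  rw [gd_mod hi', gd_div hc hi']
  constructor
  · rintro (⟨-, h⟩ | ⟨-, hK, hlvl⟩ | ⟨habs, -⟩)
    · exact h
    · rw [← hlvl]; exact lvl_lt_Ki hD w
    · exact absurd habs (by have := Hag_ge_c (c := c) (D := D) i w; omega)
  · intro h; exact Or.inl ⟨rfl, h⟩

lemma posi_gd_e (hc : 1 ≤ c) (hD : 2 ≤ D) {i w : ℕ} (hi : i < c) (hw : w < Ki D i) :
    posi c D i (gd c D w (Hag c D i w)) := by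
  have ha : Hag c D i w < nn c D := Hag_lt_nn hi (lt_of_lt_of_le hw (Ki_le_K hD hi))
  unfold posi
  rw [gd_mod ha, gd_div hc ha]
  exact Or.inr (Or.inr ⟨rfl, hw⟩)

lemma posi_gd_mem (hc : 1 ≤ c) (hD : 2 ≤ D) {i j w : ℕ} (hi : i < c) (hj : j < c)
    (hlo : low D i ≤ w) (hhi : w < Ki D i) : posi c D i (gd c D w j) := by
  have hj' : j < nn c D := lt_of_lt_of_le hj (Nat.le_add_right _ _)
  unfold posi
  rw [gd_mod hj', gd_div hc hj']
  exact Or.inr (Or.inl ⟨hj, lt_of_lt_of_le hhi (Ki_le_K hD hi), lvl_eq hlo hhi⟩)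

lemma not_posi_junk (hc : 1 ≤ c) (hD : 2 ≤ D) {i w : ℕ} (hi : i < c) (hw : K c D ≤ w) :
    ¬ posi c D i (gd c D w i) := by
  have hi' : i < nn c D := lt_of_lt_of_le hi (Nat.le_add_right _ _)
  unfold posi
  rw [gd_mod hi', gd_div hc hi']
  rintro (⟨-, h⟩ | ⟨-, hK, -⟩ | ⟨habs, -⟩)
  · exact absurd h (by have := Ki_le_K hD hi; omega)
  · omega
  · exact absurd habs (by have := Hag_ge_c (c := c) (D := D) i w; omega)

/-- the designed positives-prefix of member `i` captures exactly his positive goods -/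
lemma mem_P_iff (hc : 1 ≤ c) (hD : 2 ≤ D) {i x : ℕ} (hi : i < c) (hx : x < mm c D) :
    x ∈ A1 c D i ++ A2 c D i ++ A3 c D i ↔ posi c D i x := by
  have hi' : i < nn c D := lt_of_lt_of_le hi (Nat.le_add_right _ _)
  constructor
  · intro hmem
    rcases List.mem_append.mp hmem with hmem | hmem
    rotate_left
    · -- A3
      obtain ⟨t, ht, rfl⟩ := mem_A3.mp hmem
      obtain ⟨h1, h2⟩ := A3_w_facts hD ht
      have hc1 : 0 < c - 1 := by
        rcases Nat.eq_zero_or_pos (c-1) with h | h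
        · rw [h] at ht; omega
        · exact h
      exact posi_gd_mem hc hD hi (skipf_lt (by omega) (Nat.mod_lt _ hc1)) h1 h2
    rcases List.mem_append.mp hmem with hmem | hmem
    · -- A1
      obtain ⟨w, hw, rfl⟩ := mem_A1.mp hmem
      exact (posi_gd_own hc hD hi).mpr hw
    · -- A2
      obtain ⟨w, hw, rfl⟩ := mem_A2.mp hmem
      exact posi_gd_e hc hD hi hw
  · intro hp
    have hxg : x = gd c D (x / nn c D) (x % nn c D) := stage_eq_gd.symm
    unfold posi at hp
    rcases hp with ⟨ha, hw⟩ | ⟨ha, hwK, hlvl⟩ | ⟨ha, hw⟩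
    · refine List.mem_append.mpr (Or.inl (List.mem_append.mpr (Or.inl ?_)))
      exact mem_A1.mpr ⟨x / nn c D, hw, by rw [← ha]; exact hxg⟩
    · -- a < c case: either a = i (then A1) or a ≠ i (then A3)
      have hwKi : x / nn c D < Ki D i := by rw [← hlvl]; exact lvl_lt_Ki hD _
      have hwlo : low D i ≤ x / nn c D := by rw [← hlvl]; exact lvl_low_le _
      by_cases hai : x % nn c D = i
      · refine List.mem_append.mpr (Or.inl (List.mem_append.mpr (Or.inl ?_)))
        exact mem_A1.mpr ⟨x / nn c D, hwKi, by rw [← hai]; exact hxg⟩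
      · refine List.mem_append.mpr (Or.inr ?_)
        have hc1 : 1 ≤ c - 1 := by omega
        -- choose r with skipf i r = x % nn c D
        obtain ⟨r, hr, hskip⟩ : ∃ r, r < c - 1 ∧ skipf i r = x % nn c D := by
          by_cases hcase : x % nn c D < i
          · exact ⟨x % nn c D, by omega, by unfold skipf; rw [if_pos hcase]⟩
          · refine ⟨x % nn c D - 1, by omega, ?_⟩
            unfold skipf
            rw [if_neg (by omega)]
            omega
        refine mem_A3.mpr ⟨(x / nn c D - low D i) * (c-1) + r, ?_, ?_⟩
        · calc (x / nn c D - low D i) * (c-1) + r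
              < (x / nn c D - low D i) * (c-1) + (c-1) := by omega
          _ = (x / nn c D - low D i + 1) * (c-1) := by ring
          _ ≤ (Ki D i - low D i) * (c-1) := Nat.mul_le_mul_right _ (by omega)
          _ = (c-1) * (Ki D i - low D i) := by ring
        · have hdiv : ((x / nn c D - low D i) * (c-1) + r) / (c-1) = x / nn c D - low D i := by
            rw [show (x / nn c D - low D i) * (c-1) + r = r + (c-1) * (x / nn c D - low D i)
              by ring, Nat.add_mul_div_left _ _ hc1, Nat.div_eq_of_lt hr, Nat.zero_add]
          have hmod : ((x / nn c D - low D i) * (c-1) + r) % (c-1) = r := by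
            rw [show (x / nn c D - low D i) * (c-1) + r = r + (c-1) * (x / nn c D - low D i)
              by ring, Nat.add_mul_mod_self_left, Nat.mod_eq_of_lt hr]
          rw [hdiv, hmod, hskip, show low D i + (x / nn c D - low D i) = x / nn c D by omega]
          exact hxg
    · refine List.mem_append.mpr (Or.inl (List.mem_append.mpr (Or.inr ?_)))
      exact mem_A2.mpr ⟨x / nn c D, hw, by rw [← ha]; exact hxg⟩

end Posi

/-! ### Splitting mapped ranges -/

lemma map_range_split {α : Type*} (f : ℕ → α) {w X : ℕ} (h : w < X) :
    (List.range X).map f =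
      ((List.range w).map f) ++ f w :: ((List.range (X - w - 1)).map fun t => f (w + 1 + t)) := by
  conv_lhs => rw [show X = (w + 1) + (X - w - 1) by omega]
  rw [List.range_add, List.map_append, List.range_succ, List.map_append, List.map_map]
  simp [Function.comp]

/-! ### Decode facts for blocks -/

section Decode
variable {c D : ℕ} (hc : 1 ≤ c) (hD : 2 ≤ D)
include hc hD

lemma A1_decode {i x : ℕ} (hi : i < c) (hx : x ∈ A1 c D i) :
    x % nn c D = i ∧ x / nn c D < Ki D i := by
  obtain ⟨w, hw, rfl⟩ := mem_A1.mp hx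
  have hi' : i < nn c D := lt_of_lt_of_le hi (Nat.le_add_right _ _)
  rw [gd_mod hi', gd_div hc hi']
  exact ⟨rfl, hw⟩

lemma A2_decode {i x : ℕ} (hi : i < c) (hx : x ∈ A2 c D i) :
    c ≤ x % nn c D ∧ x / nn c D < Ki D i ∧
      x % nn c D = Hag c D i (x / nn c D) := by
  obtain ⟨w, hw, rfl⟩ := mem_A2.mp hx
  have ha : Hag c D i w < nn c D := Hag_lt_nn hi (lt_of_lt_of_le hw (Ki_le_K hD hi))
  rw [gd_mod ha, gd_div hc ha]
  exact ⟨Hag_ge_c i w, hw, rfl⟩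

lemma A3_decode {i x : ℕ} (hi : i < c) (hx : x ∈ A3 c D i) :
    x % nn c D < c ∧ x % nn c D ≠ i ∧ low D i ≤ x / nn c D ∧ x / nn c D < Ki D i := by
  obtain ⟨t, ht, rfl⟩ := mem_A3.mp hx
  have hc1 : 0 < c - 1 := by
    rcases Nat.eq_zero_or_pos (c-1) with h | h
    · rw [h] at ht; omega
    · exact h
  have hcol : skipf i (t % (c-1)) < c := skipf_lt hi (Nat.mod_lt _ hc1)
  have hcol' : skipf i (t % (c-1)) < nn c D := lt_of_lt_of_le hcol (Nat.le_add_right _ _)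
  obtain ⟨h1, h2⟩ := A3_w_facts hD ht
  rw [gd_mod hcol', gd_div hc hcol']
  exact ⟨hcol, skipf_ne, h1, h2⟩

lemma A4_decode {i x : ℕ} (hi : i < c) (hx : x ∈ A4 c D i) :
    x % nn c D = i ∧ Ki D i ≤ x / nn c D ∧ x / nn c D < RR c D := by
  obtain ⟨t, ht, rfl⟩ := mem_A4.mp hx
  have hi' : i < nn c D := lt_of_lt_of_le hi (Nat.le_add_right _ _)
  rw [gd_mod hi', gd_div hc hi']
  omega

lemma B2_decode {i x : ℕ} (hi : i < c) (hx : x ∈ B2 c D i) :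
    x % nn c D < c ∧ low D i ≤ x / nn c D ∧ x / nn c D < Ki D i := by
  obtain ⟨t, ht, rfl⟩ := mem_B2.mp hx
  have hcol : t % c < c := Nat.mod_lt _ hc
  have hcol' : t % c < nn c D := lt_of_lt_of_le hcol (Nat.le_add_right _ _)
  obtain ⟨h1, h2⟩ := B2_w_facts hc hD ht
  rw [gd_mod hcol', gd_div hc hcol']
  exact ⟨hcol, h1, h2⟩

lemma B3_decode {i x : ℕ} (hi : i < c) (hx : x ∈ B3 c D i) :
    x % nn c D = i ∧ K c D ≤ x / nn c D ∧ x / nn c D < RR c D := by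
  obtain ⟨t, ht, rfl⟩ := mem_B3.mp hx
  have hi' : i < nn c D := lt_of_lt_of_le hi (Nat.le_add_right _ _)
  rw [gd_mod hi', gd_div hc hi']
  omega

lemma Lhon_decode {a x : ℕ} (ha : a < nn c D) (hx : x ∈ Lhon c D a) :
    x % nn c D = a ∧ x / nn c D < RR c D := by
  obtain ⟨w, hw, rfl⟩ := mem_Lhon.mp hx
  rw [gd_mod ha, gd_div hc ha]
  exact ⟨rfl, hw⟩

/-! ### Bounds: all elements < mm -/

lemma preT_lt_mm {a x : ℕ} (ha : a < nn c D) (hx : x ∈ preT c D a) : x < mm c D := by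
  have : x % nn c D < nn c D ∧ x / nn c D < RR c D → x < mm c D := by
    intro ⟨h1, h2⟩
    have := stage_eq_gd (c := c) (D := D) (s := x)
    rw [← this]
    exact gd_lt_mm h2 h1
  apply this
  unfold preT at hx
  split at hx
  · next hac =>
    have hKlt := K_lt_RR (c := c) hD
    have hKi := Ki_le_K hD hac
    rcases List.mem_append.mp hx with hx | hx
    rcases List.mem_append.mp hx with hx | hx
    rcases List.mem_append.mp hx with hx | hx
    · obtain ⟨h1, h2⟩ := A1_decode hc hD hac hx
      constructor <;> [omega; omega]
    · obtain ⟨h1, h2, -⟩ := A2_decode hc hD hac hx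
      refine ⟨stage_mod_lt _ hc, by omega⟩
    · obtain ⟨h1, -, -, h4⟩ := A3_decode hc hD hac hx
      exact ⟨stage_mod_lt _ hc, by omega⟩
    · obtain ⟨h1, -, h3⟩ := A4_decode hc hD hac hx
      exact ⟨stage_mod_lt _ hc, h3⟩
  · next hac =>
    obtain ⟨h1, h2⟩ := Lhon_decode hc hD ha hx
    exact ⟨stage_mod_lt _ hc, h2⟩

lemma preM_lt_mm {a x : ℕ} (ha : a < nn c D) (hx : x ∈ preM c D a) : x < mm c D := by
  have key : x % nn c D < nn c D ∧ x / nn c D < RR c D → x < mm c D := by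
    intro ⟨h1, h2⟩
    have := stage_eq_gd (c := c) (D := D) (s := x)
    rw [← this]
    exact gd_lt_mm h2 h1
  apply key
  unfold preM at hx
  split at hx
  · next hac =>
    have hKlt := K_lt_RR (c := c) hD
    have hKi := Ki_le_K hD hac
    rcases List.mem_append.mp hx with hx | hx
    rcases List.mem_append.mp hx with hx | hx
    · obtain ⟨h1, h2, -⟩ := A2_decode hc hD hac hx
      exact ⟨stage_mod_lt _ hc, by omega⟩
    · obtain ⟨h1, -, h3⟩ := B2_decode hc hD hac hx
      exact ⟨stage_mod_lt _ hc, by omega⟩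
    · obtain ⟨h1, -, h3⟩ := B3_decode hc hD hac hx
      exact ⟨stage_mod_lt _ hc, h3⟩
  · next hac =>
    obtain ⟨h1, h2⟩ := Lhon_decode hc hD ha hx
    exact ⟨stage_mod_lt _ hc, h2⟩

end Decode

/-! ### Nodup -/

section Nodup
variable {c D : ℕ} (hc : 1 ≤ c) (hD : 2 ≤ D)
include hc hD

lemma skipf_inj {i r r' : ℕ} (h : skipf i r = skipf i r') : r = r' := by
  unfold skipf at h
  split at h <;> split at h <;> omega

omit hc hD in
lemma nodup_map_range {α : Type*} {X : ℕ} {f : ℕ → α}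
    (hf : ∀ w < X, ∀ w' < X, f w = f w' → w = w') : ((List.range X).map f).Nodup := by
  refine List.Nodup.map_on ?_ List.nodup_range
  intro w hw w' hw' h
  exact hf w (List.mem_range.mp hw) w' (List.mem_range.mp hw') h

lemma preT_nodup {a : ℕ} (ha : a < nn c D) : (preT c D a).Nodup := by
  unfold preT
  split
  · next hac =>
    have hi' : a < nn c D := ha
    have hKi := Ki_le_K hD hac
    have hA1 : (A1 c D a).Nodup := nodup_map_range (fun w hw w' hw' h => (gd_inj hc hi' hi' h).1)
    have hA2 : (A2 c D a).Nodup := by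
      refine nodup_map_range (fun w hw w' hw' h => ?_)
      exact (gd_inj hc (Hag_lt_nn hac (by omega)) (Hag_lt_nn hac (by omega)) h).1
    have hA3 : (A3 c D a).Nodup := by
      refine nodup_map_range (fun t ht t' ht' h => ?_)
      have hc1 : 0 < c - 1 := by
        rcases Nat.eq_zero_or_pos (c-1) with hz | hz
        · rw [hz] at ht; omega
        · exact hz
      have col : ∀ u, skipf a (u % (c-1)) < nn c D := fun u =>
        lt_of_lt_of_le (skipf_lt hac (Nat.mod_lt _ hc1)) (Nat.le_add_right _ _)
      obtain ⟨h1, h2⟩ := gd_inj hc (col t) (col t') h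
      have h3 : t % (c-1) = t' % (c-1) := skipf_inj hc hD h2
      have h4 : t / (c-1) = t' / (c-1) := by omega
      calc t = (c-1) * (t / (c-1)) + t % (c-1) := (Nat.div_add_mod _ _).symm
      _ = (c-1) * (t' / (c-1)) + t' % (c-1) := by rw [h4, h3]
      _ = t' := Nat.div_add_mod _ _
    have hA4 : (A4 c D a).Nodup := by
      refine nodup_map_range (fun t ht t' ht' h => ?_)
      have := (gd_inj hc hi' hi' h).1
      omega
    rw [List.append_assoc, List.append_assoc]
    rw [List.nodup_append]
    refine ⟨hA1, ?_, ?_⟩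
    · rw [List.nodup_append]
      refine ⟨hA2, ?_, ?_⟩
      · rw [List.nodup_append]
        refine ⟨hA3, hA4, ?_⟩
        intro x hx y hx' hxy; subst hxy
        obtain ⟨-, hne, -, -⟩ := A3_decode hc hD hac hx
        obtain ⟨heq, -, -⟩ := A4_decode hc hD hac hx'
        exact hne heq
      · intro x hx y hx' hxy; subst hxy
        obtain ⟨hge, -, -⟩ := A2_decode hc hD hac hx
        rcases List.mem_append.mp hx' with hx' | hx'
        · obtain ⟨hlt, -, -, -⟩ := A3_decode hc hD hac hx'
          omega
        · obtain ⟨heq, -, -⟩ := A4_decode hc hD hac hx'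
          omega
    · intro x hx y hx' hxy; subst hxy
      obtain ⟨heq, hlt⟩ := A1_decode hc hD hac hx
      rcases List.mem_append.mp hx' with hx' | hx'
      · obtain ⟨hge, -, -⟩ := A2_decode hc hD hac hx'
        omega
      rcases List.mem_append.mp hx' with hx' | hx'
      · obtain ⟨-, hne, -, -⟩ := A3_decode hc hD hac hx'
        exact hne heq
      · obtain ⟨-, hge, -⟩ := A4_decode hc hD hac hx'
        omega
  · next hac =>
    exact nodup_map_range (fun w hw w' hw' h => (gd_inj hc ha ha h).1)

lemma preM_nodup {a : ℕ} (ha : a < nn c D) : (preM c D a).Nodup := by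
  unfold preM
  split
  · next hac =>
    have hKi := Ki_le_K hD hac
    have hA2 : (A2 c D a).Nodup := by
      refine nodup_map_range (fun w hw w' hw' h => ?_)
      exact (gd_inj hc (Hag_lt_nn hac (by omega)) (Hag_lt_nn hac (by omega)) h).1
    have hB2 : (B2 c D a).Nodup := by
      refine nodup_map_range (fun t ht t' ht' h => ?_)
      have col : ∀ u : ℕ, u % c < nn c D := fun u =>
        lt_of_lt_of_le (Nat.mod_lt _ hc) (Nat.le_add_right _ _)
      obtain ⟨h1, h2⟩ := gd_inj hc (col t) (col t') h
      have h4 : t / c = t' / c := by omega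
      calc t = c * (t / c) + t % c := (Nat.div_add_mod _ _).symm
      _ = c * (t' / c) + t' % c := by rw [h4, h2]
      _ = t' := Nat.div_add_mod _ _
    have hB3 : (B3 c D a).Nodup := by
      refine nodup_map_range (fun t ht t' ht' h => ?_)
      have := (gd_inj hc (lt_of_lt_of_le hac (Nat.le_add_right _ _))
        (lt_of_lt_of_le hac (Nat.le_add_right _ _)) h).1
      omega
    rw [List.append_assoc, List.nodup_append]
    refine ⟨hA2, ?_, ?_⟩
    · rw [List.nodup_append]
      refine ⟨hB2, hB3, ?_⟩
      intro x hx y hx' hxy; subst hxy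
      obtain ⟨-, -, hlt⟩ := B2_decode hc hD hac hx
      obtain ⟨-, hge, -⟩ := B3_decode hc hD hac hx'
      omega
    · intro x hx y hx' hxy; subst hxy
      obtain ⟨hge, -, -⟩ := A2_decode hc hD hac hx
      rcases List.mem_append.mp hx' with hx' | hx'
      · obtain ⟨hlt, -, -⟩ := B2_decode hc hD hac hx'
        omega
      · obtain ⟨heq, -, -⟩ := B3_decode hc hD hac hx'
        omega
  · next hac =>
    exact nodup_map_range (fun w hw w' hw' h => (gd_inj hc ha ha h).1)

end Nodup

/-! ### Completion to full orders -/

def compl {m : ℕ} (l : List (Fin m)) : List (Fin m) :=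
  l ++ (List.finRange m).filter (fun g => decide (g ∉ l))

lemma isOrder_compl {m : ℕ} {l : List (Fin m)} (h : l.Nodup) : IsOrder (compl l) := by
  constructor
  · rw [compl, List.nodup_append]
    refine ⟨h, (List.nodup_finRange m).filter _, ?_⟩
    intro x hx y hx' hxy; subst hxy
    rw [List.mem_filter] at hx'
    simp only [decide_eq_true_eq] at hx'
    exact hx'.2 hx
  · intro g
    rw [compl, List.mem_append]
    by_cases hg : g ∈ l
    · exact Or.inl hg
    · refine Or.inr (List.mem_filter.mpr ⟨List.mem_finRange g, by simpa using hg⟩)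

/-! ### indexOf helper lemmas -/

lemma indexOf_append_left {α : Type*} [DecidableEq α] {l₁ l₂ : List α} {g : α}
    (hg : g ∈ l₁) : (l₁ ++ l₂).idxOf g < l₁.length := by
  induction l₁ with
  | nil => cases hg
  | cons a t ih =>
      by_cases hag : a = g
      · subst hag
        simp [List.idxOf_cons_self]
      · rw [List.cons_append, List.idxOf_cons_ne _ hag]
        have : g ∈ t := by
          rcases List.mem_cons.mp hg with h | h
          · exact absurd h.symm hag
          · exact h
        simpa using ih this

lemma indexOf_append_right {α : Type*} [DecidableEq α] {l₁ l₂ : List α} {g : α}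
    (hg : g ∉ l₁) : l₁.length ≤ (l₁ ++ l₂).idxOf g := by
  induction l₁ with
  | nil => simp
  | cons a t ih =>
      have hag : a ≠ g := fun h => hg (h ▸ List.mem_cons_self)
      rw [List.cons_append, List.idxOf_cons_ne _ hag]
      have : g ∉ t := fun h => hg (List.mem_cons_of_mem _ h)
      simpa using ih this

/-! ### Preference profiles -/

section Pref
variable (c D : ℕ) (hc : 1 ≤ c) (hD : 2 ≤ D)

def prefT (a : Fin (nn c D)) : List (Fin (mm c D)) :=
  compl ((preT c D a.val).map (enc c D hc hD))
def prefM (a : Fin (nn c D)) : List (Fin (mm c D)) :=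
  compl ((preM c D a.val).map (enc c D hc hD))

def vv (a : Fin (nn c D)) (g : Fin (mm c D)) : ℝ :=
  if a.val < c then val c D a.val g else 0

variable {c D}

lemma vv_nonneg (a : Fin (nn c D)) (g : Fin (mm c D)) : 0 ≤ vv c D a g := by
  unfold vv
  split
  · exact val_nonneg _ _ _ _
  · exact le_refl 0

lemma mapped_nodup_T (a : Fin (nn c D)) : ((preT c D a.val).map (enc c D hc hD)).Nodup := by
  refine List.Nodup.map_on ?_ (preT_nodup hc hD a.isLt)
  intro x hx y hy h
  exact enc_inj hc hD (preT_lt_mm hc hD a.isLt hx) (preT_lt_mm hc hD a.isLt hy) h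

lemma mapped_nodup_M (a : Fin (nn c D)) : ((preM c D a.val).map (enc c D hc hD)).Nodup := by
  refine List.Nodup.map_on ?_ (preM_nodup hc hD a.isLt)
  intro x hx y hy h
  exact enc_inj hc hD (preM_lt_mm hc hD a.isLt hx) (preM_lt_mm hc hD a.isLt hy) h

lemma isOrder_prefT (a : Fin (nn c D)) : IsOrder (prefT c D hc hD a) :=
  isOrder_compl (mapped_nodup_T hc hD a)
lemma isOrder_prefM (a : Fin (nn c D)) : IsOrder (prefM c D hc hD a) :=
  isOrder_compl (mapped_nodup_M hc hD a)

lemma prefM_eq_prefT_honest {a : Fin (nn c D)} (ha : ¬ a.val < c) :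
    prefM c D hc hD a = prefT c D hc hD a := by
  unfold prefM prefT preM preT
  rw [if_neg ha, if_neg ha]

/-- Consistency -/
lemma consistent_all (a : Fin (nn c D)) : Consistent (vv c D a) (prefT c D hc hD a) := by
  intro g g' hgt
  unfold vv at hgt
  by_cases hac : a.val < c
  · rw [if_pos hac, if_pos hac] at hgt
    unfold val at hgt
    split_ifs at hgt with h1 h2 h2
    · norm_num at hgt
    · -- posi g, ¬ posi g'
      clear hgt
      -- the positives are exactly the prefix (A1++A2++A3).map enc
      have hsplit : prefT c D hc hD a =
          ((A1 c D a.val ++ A2 c D a.val ++ A3 c D a.val).map (enc c D hc hD)) ++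
          (((A4 c D a.val).map (enc c D hc hD)) ++
            (List.finRange (mm c D)).filter
              (fun g => decide (g ∉ (preT c D a.val).map (enc c D hc hD)))) := by
        unfold prefT compl preT
        rw [if_pos hac, List.map_append, List.append_assoc]
      have hg : g ∈ (A1 c D a.val ++ A2 c D a.val ++ A3 c D a.val).map (enc c D hc hD) := by
        have := (mem_P_iff hc hD hac g.isLt).mpr h1
        refine List.mem_map.mpr ⟨g.val, this, enc_self hc hD g⟩
      have hg' : g' ∉ (A1 c D a.val ++ A2 c D a.val ++ A3 c D a.val).map (enc c D hc hD) := by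
        intro hmem
        obtain ⟨x, hxmem, hxe⟩ := List.mem_map.mp hmem
        have hxlt : x < mm c D := by
          have : x ∈ preT c D a.val := by
            unfold preT
            rw [if_pos hac]
            rcases List.mem_append.mp hxmem with h | h
            · exact List.mem_append.mpr (Or.inl (List.mem_append.mpr (Or.inl h)))
            · exact List.mem_append.mpr (Or.inl (List.mem_append.mpr (Or.inr h)))
          exact preT_lt_mm hc hD a.isLt this
        have : g'.val = x := by rw [← hxe, enc_val hc hD hxlt]
        rw [this] at h2
        exact h2 ((mem_P_iff hc hD hac hxlt).mp hxmem)
      rw [hsplit]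
      calc List.idxOf g _ < _ := indexOf_append_left hg
      _ ≤ List.idxOf g' _ := indexOf_append_right hg'
    · norm_num at hgt
    · norm_num at hgt
  · rw [if_neg hac, if_neg hac] at hgt
    norm_num at hgt

end Pref

/-! ### The manipulated schedule -/

def sigMn (c D : ℕ) (s : ℕ) : ℕ :=
  let a := s % nn c D
  let w := s / nn c D
  if a < c then
    if w < Ki D a then gd c D w (Hag c D a w)
    else if w < mu c D a then gd c D (low D a + (w - Ki D a) / c) ((w - Ki D a) % c)
    else gd c D (K c D + (w - mu c D a)) a
  else
    if (a - c) % K c D < Ki D ((a - c) / K c D) ∧ (a - c) % K c D ≤ w then gd c D (w+1) a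
    else gd c D w a

def tauN (c D : ℕ) (x : ℕ) : ℕ :=
  let a := x % nn c D
  let w := x / nn c D
  if a < c then
    if w < K c D then
      gd c D (Ki D (lvl D w) + ((w - low D (lvl D w)) * c + a)) (lvl D w)
    else gd c D (mu c D a + (w - K c D)) a
  else
    if w = (a - c) % K c D ∧ (a - c) % K c D < Ki D ((a - c) / K c D) then
      gd c D ((a - c) % K c D) ((a - c) / K c D)
    else if (a - c) % K c D < Ki D ((a - c) / K c D) ∧ (a - c) % K c D < w then
      gd c D (w - 1) a
    else gd c D w a

section Sched
variable {c D : ℕ} (hc : 1 ≤ c) (hD : 2 ≤ D)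
include hc hD

lemma honest_decode {a : ℕ} (h1 : c ≤ a) (h2 : a < nn c D) :
    (a - c) / K c D < c ∧ (a - c) % K c D < K c D ∧
      Hag c D ((a - c) / K c D) ((a - c) % K c D) = a := by
  have hK := K_pos (c := c) hD
  have hlt : a - c < c * K c D := by unfold nn at h2; omega
  refine ⟨(Nat.div_lt_iff_lt_mul hK).mpr (by rw [mul_comm] at hlt ⊢; exact hlt),
    Nat.mod_lt _ hK, ?_⟩
  unfold Hag
  rw [show (a - c) / K c D * K c D = K c D * ((a - c) / K c D) by ring]
  have := Nat.div_add_mod (a - c) (K c D)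
  omega

lemma mu_sub (i : ℕ) : mu c D i - Ki D i = c * (Ki D i - low D i) := by
  unfold mu; omega

/-- the "in-window" w-coordinate for phase 2 -/
lemma phase2_facts {i w : ℕ} (hi : i < c) (h1 : Ki D i ≤ w) (h2 : w < mu c D i) :
    low D i ≤ low D i + (w - Ki D i) / c ∧
    low D i + (w - Ki D i) / c < Ki D i ∧
    lvl D (low D i + (w - Ki D i) / c) = i ∧
    (w - Ki D i) % c < c := by
  have ht : w - Ki D i < c * (Ki D i - low D i) := by
    have := mu_sub (c := c) (D := D) hc hD i
    omega
  obtain ⟨f1, f2⟩ := B2_w_facts hc hD ht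
  exact ⟨f1, f2, lvl_eq f1 f2, Nat.mod_lt _ hc⟩

lemma tau_sigM {s : ℕ} (hs : s < W c D * nn c D) : tauN c D (sigMn c D s) = s := by
  have hcnn : c ≤ nn c D := Nat.le_add_right _ _
  have hsm : s % nn c D < nn c D := stage_mod_lt s hc
  have hsw : s / nn c D < W c D := stage_div_lt hc hs
  have hstage : gd c D (s / nn c D) (s % nn c D) = s := stage_eq_gd
  set a := s % nn c D with hadef
  set w := s / nn c D with hwdef
  unfold sigMn
  rw [← hadef, ← hwdef]
  by_cases hac : a < c
  · rw [if_pos hac]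
    have hKi := Ki_le_K hD hac
    by_cases h1 : w < Ki D a
    · rw [if_pos h1]
      -- phase 1 : good (w, Hag a w)
      have hagnn : Hag c D a w < nn c D := Hag_lt_nn hac (by omega)
      unfold tauN
      rw [gd_mod hagnn, gd_div hc hagnn]
      have hge : ¬ Hag c D a w < c := by have := Hag_ge_c (c := c) (D := D) a w; omega
      rw [if_neg hge]
      have hwK : w < K c D := by omega
      have hdz : Hag c D a w - c = a * K c D + w := by
        unfold Hag
        rw [Nat.add_assoc, Nat.add_sub_cancel_left]
      have hdiv : (Hag c D a w - c) / K c D = a := by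
        rw [hdz, show a * K c D + w = w + K c D * a by ring,
          Nat.add_mul_div_left _ _ (K_pos hD), Nat.div_eq_of_lt hwK, Nat.zero_add]
      have hmod : (Hag c D a w - c) % K c D = w := by
        rw [hdz, show a * K c D + w = w + K c D * a by ring,
          Nat.add_mul_mod_self_left, Nat.mod_eq_of_lt hwK]
      rw [hdiv, hmod, if_pos ⟨rfl, h1⟩]
      rw [← hstage]
    · rw [if_neg h1]
      by_cases h2 : w < mu c D a
      · rw [if_pos h2]
        -- phase 2
        obtain ⟨f1, f2, f3, f4⟩ := phase2_facts hc hD hac (by omega) h2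
        have hcol : (w - Ki D a) % c < nn c D := lt_of_lt_of_le f4 (Nat.le_add_right _ _)
        unfold tauN
        rw [gd_mod hcol, gd_div hc hcol, if_pos f4,
          if_pos (by omega : low D a + (w - Ki D a) / c < K c D)]
        rw [f3]
        have harith : Ki D a + ((low D a + (w - Ki D a) / c - low D a) * c + (w - Ki D a) % c) = w := by
          have : (low D a + (w - Ki D a) / c - low D a) = (w - Ki D a) / c := by omega
          rw [this]
          have := Nat.div_add_mod (w - Ki D a) c
          have hmc : (w - Ki D a) / c * c = c * ((w - Ki D a) / c) := by ring
          omega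
        rw [harith, ← hstage]
      · rw [if_neg h2]
        -- phase 3
        have hann : a < nn c D := hsm
        unfold tauN
        rw [gd_mod hann, gd_div hc hann, if_pos hac]
        rw [if_neg (by omega : ¬ K c D + (w - mu c D a) < K c D)]
        have : mu c D a + (K c D + (w - mu c D a) - K c D) = w := by omega
        rw [this, ← hstage]
  · rw [if_neg hac]
    obtain ⟨hj, hu, hHag⟩ := honest_decode hc hD (by omega) hsm
    set j := (a - c) / K c D with hjdef
    set u := (a - c) % K c D with hudef
    by_cases hsh : u < Ki D j ∧ u ≤ w
    · rw [if_pos hsh]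
      unfold tauN
      rw [gd_mod hsm, gd_div hc hsm, if_neg hac, ← hjdef, ← hudef]
      rw [if_neg (by omega : ¬ (w + 1 = u ∧ u < Ki D j))]
      rw [if_pos ⟨hsh.1, by omega⟩]
      have : w + 1 - 1 = w := by omega
      rw [this, ← hstage]
    · rw [if_neg hsh]
      unfold tauN
      rw [gd_mod hsm, gd_div hc hsm, if_neg hac, ← hjdef, ← hudef]
      rw [if_neg (by omega : ¬ (w = u ∧ u < Ki D j)), if_neg (by omega : ¬ (u < Ki D j ∧ u < w))]
      rw [← hstage]

lemma sigM_lt_mm {s : ℕ} (hs : s < W c D * nn c D) : sigMn c D s < mm c D := by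
  have hcnn : c ≤ nn c D := Nat.le_add_right _ _
  have hsm : s % nn c D < nn c D := stage_mod_lt s hc
  have hsw : s / nn c D < W c D := stage_div_lt hc hs
  have hWRR := W_lt_RR (c := c) hD
  have hKRR := K_lt_RR (c := c) hD
  set a := s % nn c D with hadef
  set w := s / nn c D with hwdef
  unfold sigMn
  rw [← hadef, ← hwdef]
  by_cases hac : a < c
  · rw [if_pos hac]
    have hKi := Ki_le_K hD hac
    by_cases h1 : w < Ki D a
    · rw [if_pos h1]
      exact gd_lt_mm (by omega) (Hag_lt_nn hac (by omega))
    · rw [if_neg h1]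
      by_cases h2 : w < mu c D a
      · rw [if_pos h2]
        obtain ⟨f1, f2, f3, f4⟩ := phase2_facts hc hD hac (by omega) h2
        exact gd_lt_mm (by omega) (by omega)
      · rw [if_neg h2]
        refine gd_lt_mm ?_ (by omega)
        have : W c D + K c D = RR c D := by unfold W RR; ring
        omega
  · rw [if_neg hac]
    split
    · exact gd_lt_mm (by omega) hsm
    · exact gd_lt_mm (by omega) hsm

lemma sigM_inj {s s' : ℕ} (hs : s < W c D * nn c D) (hs' : s' < W c D * nn c D)
    (h : sigMn c D s = sigMn c D s') : s = s' := by
  have := tau_sigM hc hD hs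
  have := tau_sigM hc hD hs'
  rw [← tau_sigM hc hD hs, ← tau_sigM hc hD hs', h]

end Sched

/-! ### Split helper for completed lists -/

lemma compl_split {m : ℕ} {pre X Y : List ℕ} {x : ℕ} (e : ℕ → Fin m) (h : pre = X ++ x :: Y) :
    compl (pre.map e) = X.map e ++ e x ::
      (Y.map e ++ (List.finRange m).filter (fun g => decide (g ∉ pre.map e))) := by
  rw [h, compl, List.map_append, List.map_cons, List.append_assoc, List.cons_append]

section SigEval
variable {c D : ℕ} (hc : 1 ≤ c) (hD : 2 ≤ D)
include hc hD

lemma sigM_p1 {a w : ℕ} (hac : a < c) (hw : w < Ki D a) :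
    sigMn c D (gd c D w a) = gd c D w (Hag c D a w) := by
  have hann : a < nn c D := lt_of_lt_of_le hac (Nat.le_add_right _ _)
  unfold sigMn
  rw [gd_mod hann, gd_div hc hann, if_pos hac, if_pos hw]

lemma sigM_p2 {a w : ℕ} (hac : a < c) (h1 : Ki D a ≤ w) (h2 : w < mu c D a) :
    sigMn c D (gd c D w a) =
      gd c D (low D a + (w - Ki D a) / c) ((w - Ki D a) % c) := by
  have hann : a < nn c D := lt_of_lt_of_le hac (Nat.le_add_right _ _)
  unfold sigMn
  rw [gd_mod hann, gd_div hc hann, if_pos hac, if_neg (by omega), if_pos h2]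

lemma sigM_p3 {a w : ℕ} (hac : a < c) (h : mu c D a ≤ w) :
    sigMn c D (gd c D w a) = gd c D (K c D + (w - mu c D a)) a := by
  have hann : a < nn c D := lt_of_lt_of_le hac (Nat.le_add_right _ _)
  have hKimu : Ki D a ≤ mu c D a := by unfold mu; omega
  unfold sigMn
  rw [gd_mod hann, gd_div hc hann, if_pos hac, if_neg (by omega), if_neg (by omega)]

lemma sigM_hon {a w : ℕ} (hca : c ≤ a) (hann : a < nn c D) :
    sigMn c D (gd c D w a) =
      if (a - c) % K c D < Ki D ((a - c) / K c D) ∧ (a - c) % K c D ≤ w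
      then gd c D (w+1) a else gd c D w a := by
  unfold sigMn
  rw [gd_mod hann, gd_div hc hann, if_neg (by omega)]

/-- elements of the positives prefix are below the `Ki·nn` stage -/
lemma P_lt_stage {i x : ℕ} (hi : i < c) (hx : x ∈ A1 c D i ++ A2 c D i ++ A3 c D i) :
    x < Ki D i * nn c D := by
  have hxg : x = gd c D (x / nn c D) (x % nn c D) := stage_eq_gd.symm
  have hdiv : x / nn c D < Ki D i := by
    rcases List.mem_append.mp hx with hx | hx
    · rcases List.mem_append.mp hx with hx | hx
      · exact (A1_decode hc hD hi hx).2
      · exact (A2_decode hc hD hi hx).2.1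
    · exact (A3_decode hc hD hi hx).2.2.2
  rw [hxg]
  exact gd_lt_mul (stage_mod_lt x hc) hdiv

end SigEval

/-! ### Dominance: truthful run -/

section DomT
variable {c D : ℕ} (hc : 1 ≤ c) (hD : 2 ≤ D)
include hc hD

lemma dom_T : ∀ s < mm c D, ∃ l₁ l₂,
    prefT c D hc hD ⟨s % nn c D, Nat.mod_lt s (nn_pos hc)⟩ =
      l₁ ++ enc c D hc hD s :: l₂ ∧
    (∀ g ∈ l₁, ∃ s' < s, enc c D hc hD s' = g) ∧
    (∀ s' < s, enc c D hc hD s' ≠ enc c D hc hD s) := by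
  intro s hs
  have hsm : s % nn c D < nn c D := stage_mod_lt s hc
  have hsw : s / nn c D < RR c D := stage_div_lt hc (by unfold mm at hs; exact hs)
  obtain ⟨w, a, hw, ha, rfl⟩ : ∃ w a, w < RR c D ∧ a < nn c D ∧ s = gd c D w a :=
    ⟨s / nn c D, s % nn c D, hsw, hsm, stage_eq_gd.symm⟩
  have hsmm : gd c D w a < mm c D := hs
  have hfresh : ∀ s' < gd c D w a, enc c D hc hD s' ≠ enc c D hc hD (gd c D w a) := by
    intro s' hs' h
    exact absurd (enc_inj hc hD (lt_trans hs' hsmm) hsmm h) (Nat.ne_of_lt hs')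
  have hfin : (⟨gd c D w a % nn c D, Nat.mod_lt _ (nn_pos hc)⟩ : Fin (nn c D)) = ⟨a, ha⟩ :=
    Fin.ext (gd_mod ha)
  rw [hfin]
  have hprefT : prefT c D hc hD ⟨a, ha⟩ = compl ((preT c D a).map (enc c D hc hD)) := rfl
  by_cases hac : a < c
  · have hKi := Ki_le_K hD hac
    have hKRR := K_lt_RR (c := c) hD
    by_cases hwKi : w < Ki D a
    · -- member, early round : designated = A1[w]
      have hA1 : A1 c D a = ((List.range w).map fun v => gd c D v a) ++ gd c D w a ::
          ((List.range (Ki D a - w - 1)).map fun t => gd c D (w + 1 + t) a) :=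
        map_range_split _ hwKi
      have hpre : preT c D a = ((List.range w).map fun v => gd c D v a) ++ gd c D w a ::
          (((List.range (Ki D a - w - 1)).map fun t => gd c D (w + 1 + t) a) ++
            A2 c D a ++ A3 c D a ++ A4 c D a) := by
        unfold preT
        rw [if_pos hac, hA1]
        simp [List.append_assoc]
      refine ⟨_, _, by rw [hprefT, compl_split _ hpre], ?_, hfresh⟩
      intro g hg
      obtain ⟨x, hx, rfl⟩ := List.mem_map.mp hg
      obtain ⟨v, hv, rfl⟩ := List.mem_map.mp hx
      exact ⟨gd c D v a, gd_mono_w ha (List.mem_range.mp hv), rfl⟩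
    · -- member, late round : designated = A4[w - Ki]
      have ht0 : w - Ki D a < RR c D - Ki D a := by omega
      have hA4 : A4 c D a = ((List.range (w - Ki D a)).map fun t => gd c D (Ki D a + t) a) ++
          gd c D (Ki D a + (w - Ki D a)) a :: ((List.range (RR c D - Ki D a - (w - Ki D a) - 1)).map
            fun t => gd c D (Ki D a + (w - Ki D a + 1 + t)) a) :=
        map_range_split (fun t => gd c D (Ki D a + t) a) ht0
      rw [show Ki D a + (w - Ki D a) = w by omega] at hA4
      have hpre : preT c D a = (A1 c D a ++ A2 c D a ++ A3 c D a ++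
          ((List.range (w - Ki D a)).map fun t => gd c D (Ki D a + t) a)) ++ gd c D w a ::
          ((List.range (RR c D - Ki D a - (w - Ki D a) - 1)).map
            fun t => gd c D (Ki D a + (w - Ki D a + 1 + t)) a) := by
        unfold preT
        rw [if_pos hac, hA4]
        simp [List.append_assoc]
      refine ⟨_, _, by rw [hprefT, compl_split _ hpre], ?_, hfresh⟩
      intro g hg
      obtain ⟨x, hx, rfl⟩ := List.mem_map.mp hg
      refine ⟨x, ?_, rfl⟩
      rcases List.mem_append.mp hx with hx | hx
      · have hxlt : x < Ki D a * nn c D := P_lt_stage hc hD hac hx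
        calc x < Ki D a * nn c D := hxlt
        _ ≤ w * nn c D := Nat.mul_le_mul_right _ (by omega)
        _ ≤ gd c D w a := Nat.le_add_right _ _
      · obtain ⟨t, ht, rfl⟩ := List.mem_map.mp hx
        exact gd_mono_w ha (by have := List.mem_range.mp ht; omega)
  · -- honest agent
    have hLhon : Lhon c D a = ((List.range w).map fun v => gd c D v a) ++ gd c D w a ::
        ((List.range (RR c D - w - 1)).map fun t => gd c D (w + 1 + t) a) :=
      map_range_split _ hw
    have hpre : preT c D a = ((List.range w).map fun v => gd c D v a) ++ gd c D w a ::
        ((List.range (RR c D - w - 1)).map fun t => gd c D (w + 1 + t) a) := by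
      unfold preT
      rw [if_neg hac, hLhon]
    refine ⟨_, _, by rw [hprefT, compl_split _ hpre], ?_, hfresh⟩
    intro g hg
    obtain ⟨x, hx, rfl⟩ := List.mem_map.mp hg
    obtain ⟨v, hv, rfl⟩ := List.mem_map.mp hx
    exact ⟨gd c D v a, gd_mono_w ha (List.mem_range.mp hv), rfl⟩

end DomT

/-! ### Dominance: manipulated run -/

section DomM
variable {c D : ℕ} (hc : 1 ≤ c) (hD : 2 ≤ D)
include hc hD

lemma dom_M : ∀ s < W c D * nn c D, ∃ l₁ l₂,
    prefM c D hc hD ⟨s % nn c D, Nat.mod_lt s (nn_pos hc)⟩ =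
      l₁ ++ enc c D hc hD (sigMn c D s) :: l₂ ∧
    (∀ g ∈ l₁, ∃ s' < s, enc c D hc hD (sigMn c D s') = g) ∧
    (∀ s' < s, enc c D hc hD (sigMn c D s') ≠ enc c D hc hD (sigMn c D s)) := by
  intro s hS
  obtain ⟨w, a, hw, ha, rfl⟩ : ∃ w a, w < W c D ∧ a < nn c D ∧ s = gd c D w a :=
    ⟨s / nn c D, s % nn c D, stage_div_lt hc hS, stage_mod_lt s hc, stage_eq_gd.symm⟩
  have hfresh : ∀ s' < gd c D w a, enc c D hc hD (sigMn c D s') ≠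
      enc c D hc hD (sigMn c D (gd c D w a)) := by
    intro s' hs' h
    have hs'W : s' < W c D * nn c D := lt_trans hs' hS
    have := enc_inj hc hD (sigM_lt_mm hc hD hs'W) (sigM_lt_mm hc hD hS) h
    exact absurd (sigM_inj hc hD hs'W hS this) (Nat.ne_of_lt hs')
  have hfin : (⟨gd c D w a % nn c D, Nat.mod_lt _ (nn_pos hc)⟩ : Fin (nn c D)) = ⟨a, ha⟩ :=
    Fin.ext (gd_mod ha)
  rw [hfin]
  have hprefM : prefM c D hc hD ⟨a, ha⟩ = compl ((preM c D a).map (enc c D hc hD)) := rfl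
  have hWRR := W_lt_RR (c := c) hD
  by_cases hac : a < c
  · have hKi := Ki_le_K hD hac
    have hKimu : Ki D a ≤ mu c D a := by unfold mu; omega
    by_cases hp1 : w < Ki D a
    · -- phase 1 : collect e-good
      have hdes : sigMn c D (gd c D w a) = gd c D w (Hag c D a w) := sigM_p1 hc hD hac hp1
      have hA2 : A2 c D a = ((List.range w).map fun v => gd c D v (Hag c D a v)) ++
          gd c D w (Hag c D a w) :: ((List.range (Ki D a - w - 1)).map
            fun t => gd c D (w + 1 + t) (Hag c D a (w + 1 + t))) :=
        map_range_split _ hp1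
      have hpre : preM c D a = ((List.range w).map fun v => gd c D v (Hag c D a v)) ++
          gd c D w (Hag c D a w) :: (((List.range (Ki D a - w - 1)).map
            fun t => gd c D (w + 1 + t) (Hag c D a (w + 1 + t))) ++ B2 c D a ++ B3 c D a) := by
        unfold preM
        rw [if_pos hac, hA2]
        simp [List.append_assoc]
      refine ⟨_, _, by rw [hprefM, hdes, compl_split _ hpre], ?_, hfresh⟩
      intro g hg
      obtain ⟨x, hx, rfl⟩ := List.mem_map.mp hg
      obtain ⟨v, hv, rfl⟩ := List.mem_map.mp hx
      have hvw : v < w := List.mem_range.mp hv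
      exact ⟨gd c D v a, gd_mono_w ha hvw,
        by rw [sigM_p1 hc hD hac (by omega)]⟩
    · by_cases hp2 : w < mu c D a
      · -- phase 2 : collect window good
        have hdes : sigMn c D (gd c D w a) =
            gd c D (low D a + (w - Ki D a) / c) ((w - Ki D a) % c) :=
          sigM_p2 hc hD hac (by omega) hp2
        have ht0 : w - Ki D a < c * (Ki D a - low D a) := by
          have := mu_sub (c := c) (D := D) hc hD a
          omega
        have hB2 : B2 c D a = ((List.range (w - Ki D a)).map
            fun t => gd c D (low D a + t / c) (t % c)) ++
            gd c D (low D a + (w - Ki D a) / c) ((w - Ki D a) % c) ::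
            ((List.range (c * (Ki D a - low D a) - (w - Ki D a) - 1)).map
              fun t => gd c D (low D a + (w - Ki D a + 1 + t) / c) ((w - Ki D a + 1 + t) % c)) :=
          map_range_split _ ht0
        have hpre : preM c D a = (A2 c D a ++ ((List.range (w - Ki D a)).map
            fun t => gd c D (low D a + t / c) (t % c))) ++
            gd c D (low D a + (w - Ki D a) / c) ((w - Ki D a) % c) ::
            (((List.range (c * (Ki D a - low D a) - (w - Ki D a) - 1)).map
              fun t => gd c D (low D a + (w - Ki D a + 1 + t) / c) ((w - Ki D a + 1 + t) % c)) ++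
              B3 c D a) := by
          unfold preM
          rw [if_pos hac, hB2]
          simp [List.append_assoc]
        refine ⟨_, _, by rw [hprefM, hdes, compl_split _ hpre], ?_, hfresh⟩
        intro g hg
        obtain ⟨x, hx, rfl⟩ := List.mem_map.mp hg
        rcases List.mem_append.mp hx with hx | hx
        · obtain ⟨v, hv, rfl⟩ := mem_A2.mp hx
          exact ⟨gd c D v a, gd_mono_w ha (by omega),
            by rw [sigM_p1 hc hD hac (by omega)]⟩
        · obtain ⟨t, ht, rfl⟩ := List.mem_map.mp hx
          have htw : t < w - Ki D a := List.mem_range.mp ht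
          refine ⟨gd c D (Ki D a + t) a, gd_mono_w ha (by omega), ?_⟩
          rw [sigM_p2 hc hD hac (by omega) (by omega), Nat.add_sub_cancel_left]
      · -- phase 3 : collect junk
        have hdes : sigMn c D (gd c D w a) = gd c D (K c D + (w - mu c D a)) a :=
          sigM_p3 hc hD hac (by omega)
        have hRKW : RR c D - K c D = W c D := by
          have : RR c D = W c D + K c D := by unfold RR W; ring
          omega
        have ht0 : w - mu c D a < RR c D - K c D := by omega
        have hB3 : B3 c D a = ((List.range (w - mu c D a)).map
            fun t => gd c D (K c D + t) a) ++
            gd c D (K c D + (w - mu c D a)) a ::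
            ((List.range (RR c D - K c D - (w - mu c D a) - 1)).map
              fun t => gd c D (K c D + (w - mu c D a + 1 + t)) a) :=
          map_range_split _ ht0
        have hpre : preM c D a = (A2 c D a ++ B2 c D a ++ ((List.range (w - mu c D a)).map
            fun t => gd c D (K c D + t) a)) ++
            gd c D (K c D + (w - mu c D a)) a ::
            (((List.range (RR c D - K c D - (w - mu c D a) - 1)).map
              fun t => gd c D (K c D + (w - mu c D a + 1 + t)) a)) := by
          unfold preM
          rw [if_pos hac, hB3]
          simp [List.append_assoc]
        refine ⟨_, _, by rw [hprefM, hdes, compl_split _ hpre], ?_, hfresh⟩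
        intro g hg
        obtain ⟨x, hx, rfl⟩ := List.mem_map.mp hg
        rcases List.mem_append.mp hx with hx | hx
        rcases List.mem_append.mp hx with hx | hx
        · obtain ⟨v, hv, rfl⟩ := mem_A2.mp hx
          exact ⟨gd c D v a, gd_mono_w ha (by omega),
            by rw [sigM_p1 hc hD hac (by omega)]⟩
        · obtain ⟨t, ht, rfl⟩ := mem_B2.mp hx
          have hmu := mu_sub (c := c) (D := D) hc hD a
          refine ⟨gd c D (Ki D a + t) a, gd_mono_w ha (by omega), ?_⟩
          rw [sigM_p2 hc hD hac (by omega) (by omega), Nat.add_sub_cancel_left]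
        · obtain ⟨t, ht, rfl⟩ := List.mem_map.mp hx
          have htw : t < w - mu c D a := List.mem_range.mp ht
          refine ⟨gd c D (mu c D a + t) a, gd_mono_w ha (by omega), ?_⟩
          rw [sigM_p3 hc hD hac (by omega), Nat.add_sub_cancel_left]
  · -- honest agent
    obtain ⟨hj, hu, hHag⟩ := honest_decode hc hD (by omega) ha
    have hpreM : preM c D a = Lhon c D a := by unfold preM; rw [if_neg hac]
    by_cases hsh : (a - c) % K c D < Ki D ((a - c) / K c D) ∧ (a - c) % K c D ≤ w
    · -- shifted pick : designated (w+1, a)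
      have hdes : sigMn c D (gd c D w a) = gd c D (w+1) a := by
        rw [sigM_hon hc hD (by omega) ha, if_pos hsh]
      have hw1 : w + 1 < RR c D := by omega
      have hLhon : Lhon c D a = ((List.range (w+1)).map fun v => gd c D v a) ++
          gd c D (w+1) a :: ((List.range (RR c D - (w+1) - 1)).map
            fun t => gd c D (w + 1 + 1 + t) a) :=
        map_range_split _ hw1
      have hpre : preM c D a = ((List.range (w+1)).map fun v => gd c D v a) ++
          gd c D (w+1) a :: ((List.range (RR c D - (w+1) - 1)).map
            fun t => gd c D (w + 1 + 1 + t) a) := by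
        rw [hpreM, hLhon]
      refine ⟨_, _, by rw [hprefM, hdes, compl_split _ hpre], ?_, hfresh⟩
      intro g hg
      obtain ⟨x, hx, rfl⟩ := List.mem_map.mp hg
      obtain ⟨v, hv, rfl⟩ := List.mem_map.mp hx
      have hvw : v < w + 1 := List.mem_range.mp hv
      rcases lt_trichotomy v ((a - c) % K c D) with hvu | hvu | hvu
      · -- before the skipped index : unshifted
        refine ⟨gd c D v a, gd_mono_w ha (by omega), ?_⟩
        rw [sigM_hon hc hD (by omega) ha, if_neg (by omega)]
      · -- exactly the skipped index : consumed by member  j at stage (u, j)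
        refine ⟨gd c D v ((a - c) / K c D), ?_, ?_⟩
        · rcases Nat.lt_or_ge v w with h | h
          · exact gd_mono_w (lt_of_lt_of_le hj (Nat.le_add_right _ _)) h
          · have hvw' : v = w := by omega
            subst hvw'
            exact gd_mono_a (by omega)
        · rw [hvu, sigM_p1 hc hD hj hsh.1, hHag]
      · -- after the skipped index : shifted by one
        refine ⟨gd c D (v - 1) a, gd_mono_w ha (by omega), ?_⟩
        rw [sigM_hon hc hD (by omega) ha, if_pos ⟨hsh.1, by omega⟩,
          show v - 1 + 1 = v from by omega]
    · -- unshifted pick : designated (w, a)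
      have hdes : sigMn c D (gd c D w a) = gd c D w a := by
        rw [sigM_hon hc hD (by omega) ha, if_neg hsh]
      have hwRR : w < RR c D := by omega
      have hLhon : Lhon c D a = ((List.range w).map fun v => gd c D v a) ++
          gd c D w a :: ((List.range (RR c D - w - 1)).map
            fun t => gd c D (w + 1 + t) a) :=
        map_range_split _ hwRR
      have hpre : preM c D a = ((List.range w).map fun v => gd c D v a) ++
          gd c D w a :: ((List.range (RR c D - w - 1)).map
            fun t => gd c D (w + 1 + t) a) := by
        rw [hpreM, hLhon]
      refine ⟨_, _, by rw [hprefM, hdes, compl_split _ hpre], ?_, hfresh⟩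
      intro g hg
      obtain ⟨x, hx, rfl⟩ := List.mem_map.mp hg
      obtain ⟨v, hv, rfl⟩ := List.mem_map.mp hx
      have hvw : v < w := List.mem_range.mp hv
      refine ⟨gd c D v a, gd_mono_w ha hvw, ?_⟩
      rw [sigM_hon hc hD (by omega) ha, if_neg (by omega)]

end DomM

/-! ### Evaluating the two runs -/

section Eval
variable {c D : ℕ} (hc : 1 ≤ c) (hD : 2 ≤ D)
include hc hD

lemma stageset (X : ℕ) {a : ℕ} (ha : a < nn c D) :
    (Finset.range (X * nn c D)).filter (fun t => t % nn c D = a) =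
      (Finset.range X).image (fun w => gd c D w a) := by
  ext t
  simp only [Finset.mem_filter, Finset.mem_range, Finset.mem_image]
  constructor
  · rintro ⟨ht, hmod⟩
    exact ⟨t / nn c D, stage_div_lt hc ht, by rw [← hmod]; exact stage_eq_gd⟩
  · rintro ⟨w, hw, rfl⟩
    exact ⟨gd_lt_mul ha hw, gd_mod ha⟩

lemma bundle_T (a : Fin (nn c D)) :
    rr (nn c D) (nn_pos hc) (prefT c D hc hD) a =
      (Finset.range (RR c D)).image (fun w => enc c D hc hD (gd c D w a.val)) := by
  have hrun := rrState_scheduled (nn_pos hc) (prefT c D hc hD) (enc c D hc hD) (mm c D)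
    (dom_T hc hD) (mm c D) le_rfl
  unfold rr
  rw [Fintype.card_fin, (hrun.2 a)]
  show Finset.image (enc c D hc hD)
      ((Finset.range (RR c D * nn c D)).filter (fun t => t % nn c D = a.val)) = _
  rw [stageset hc hD (RR c D) a.isLt, Finset.image_image]
  rfl

lemma sum_T {i : Fin (nn c D)} (hi : i.val < c) :
    ∑ g ∈ rr (nn c D) (nn_pos hc) (prefT c D hc hD) i, vv c D i g = (Ki D i.val : ℝ) := by
  rw [bundle_T hc hD i]
  have hKiRR : Ki D i.val ≤ RR c D :=
    le_of_lt (lt_of_le_of_lt (Ki_le_K hD hi) (K_lt_RR hD))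
  rw [Finset.sum_image ?hinj]
  case hinj =>
    intro w hw w' hw' h
    have h1 := enc_inj hc hD (gd_lt_mm (Finset.mem_range.mp hw) i.isLt)
      (gd_lt_mm (Finset.mem_range.mp hw') i.isLt) h
    exact (gd_inj hc i.isLt i.isLt h1).1
  have hterm : ∀ w ∈ Finset.range (RR c D),
      vv c D i (enc c D hc hD (gd c D w i.val)) = if w < Ki D i.val then 1 else 0 := by
    intro w hw
    have hwRR : w < RR c D := Finset.mem_range.mp hw
    unfold vv val
    rw [if_pos hi, enc_val hc hD (gd_lt_mm hwRR i.isLt)]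
    by_cases h : w < Ki D i.val
    · rw [if_pos ((posi_gd_own hc hD hi).mpr h), if_pos h]
    · rw [if_neg (fun hp => h ((posi_gd_own hc hD hi).mp hp)), if_neg h]
  rw [Finset.sum_congr rfl hterm, Finset.sum_boole]
  have : (Finset.range (RR c D)).filter (fun w => w < Ki D i.val) =
      Finset.range (Ki D i.val) := by
    ext w
    simp only [Finset.mem_filter, Finset.mem_range]
    omega
  rw [this, Finset.card_range]

lemma sum_M {i : Fin (nn c D)} (hi : i.val < c) :
    (mu c D i.val : ℝ) ≤
      ∑ g ∈ rr (nn c D) (nn_pos hc) (prefM c D hc hD) i, vv c D i g := by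
  have hrun := rrState_scheduled (nn_pos hc) (prefM c D hc hD)
    (fun s => enc c D hc hD (sigMn c D s)) (W c D * nn c D)
    (dom_M hc hD) (W c D * nn c D) le_rfl
  have hsub : ((Finset.range (W c D * nn c D)).filter
        (fun t => t % nn c D = i.val)).image (fun s => enc c D hc hD (sigMn c D s)) ⊆
      rr (nn c D) (nn_pos hc) (prefM c D hc hD) i := by
    rw [← hrun.2 i]
    unfold rr
    rw [Fintype.card_fin]
    exact rrState_bundle_mono (nn_pos hc) _ _ _ (Wnn_le_mm hD) i
  refine le_trans ?_ (Finset.sum_le_sum_of_subset_of_nonneg hsub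
    (fun g _ _ => vv_nonneg i g))
  rw [stageset hc hD (W c D) i.isLt, Finset.image_image,
    show ((fun s => enc c D hc hD (sigMn c D s)) ∘ fun w => gd c D w i.val) =
      (fun w => enc c D hc hD (sigMn c D (gd c D w i.val))) from rfl]
  have hinj : ∀ w ∈ Finset.range (W c D), ∀ w' ∈ Finset.range (W c D),
      enc c D hc hD (sigMn c D (gd c D w i.val)) =
        enc c D hc hD (sigMn c D (gd c D w' i.val)) → w = w' := by
    intro w hw w' hw' h
    have hwW : w < W c D := Finset.mem_range.mp hw
    have hw'W : w' < W c D := Finset.mem_range.mp hw'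
    have hb : gd c D w i.val < W c D * nn c D := gd_lt_mul i.isLt hwW
    have hb' : gd c D w' i.val < W c D * nn c D := gd_lt_mul i.isLt hw'W
    have h1 := enc_inj hc hD (sigM_lt_mm hc hD hb) (sigM_lt_mm hc hD hb') h
    have h2 := sigM_inj hc hD hb hb' h1
    exact (gd_inj hc i.isLt i.isLt h2).1
  rw [Finset.sum_image hinj]
  have hterm : ∀ w ∈ Finset.range (W c D),
      vv c D i (enc c D hc hD (sigMn c D (gd c D w i.val))) =
        if w < mu c D i.val then 1 else 0 := by
    intro w hw
    have hwW : w < W c D := Finset.mem_range.mp hw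
    have hb : gd c D w i.val < W c D * nn c D := gd_lt_mul i.isLt hwW
    have henc : (enc c D hc hD (sigMn c D (gd c D w i.val))).val =
        sigMn c D (gd c D w i.val) := enc_val hc hD (sigM_lt_mm hc hD hb)
    have hKimu : Ki D i.val ≤ mu c D i.val := by unfold mu; omega
    unfold vv val
    rw [if_pos hi, henc]
    by_cases h1 : w < Ki D i.val
    · rw [sigM_p1 hc hD hi h1, if_pos (posi_gd_e hc hD hi h1), if_pos (by omega)]
    · by_cases h2 : w < mu c D i.val
      · obtain ⟨f1, f2, f3, f4⟩ := phase2_facts hc hD hi (by omega) h2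
        rw [sigM_p2 hc hD hi (by omega) h2,
          if_pos (posi_gd_mem hc hD hi f4 f1 f2), if_pos h2]
      · rw [sigM_p3 hc hD hi (by omega),
          if_neg (not_posi_junk hc hD hi (by omega)), if_neg h2]
  rw [Finset.sum_congr rfl hterm, Finset.sum_boole]
  have : (Finset.range (W c D)).filter (fun w => w < mu c D i.val) =
      Finset.range (mu c D i.val) := by
    ext w
    simp only [Finset.mem_filter, Finset.mem_range]
    have := mu_le_W hD hi
    omega
  rw [this, Finset.card_range]

end Eval

/-! ### The ratio inequality -/

lemma ratio_ineq {c D : ℕ} (hc : 1 ≤ c) (hD : 2 ≤ D) {ε : ℝ} (hε : 0 < ε)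
    (hcD : (c : ℝ) ≤ ε * D) {i : ℕ} (hi : i < c) :
    ((c : ℝ) + 1 - ε) * (Ki D i : ℝ) ≤ (mu c D i : ℝ) := by
  have hlow : low D i ≤ Ki D i := low_le_Ki hD i
  have hmu : (mu c D i : ℝ) = (Ki D i : ℝ) + c * ((Ki D i : ℝ) - (low D i : ℝ)) := by
    unfold mu
    push_cast [Nat.cast_sub hlow]
    ring
  rw [hmu]
  rcases Nat.eq_zero_or_pos i with rfl | hpos
  · have hlowz : (low D 0 : ℝ) = 0 := by unfold low; rw [if_pos rfl]; norm_num
    rw [hlowz]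
    have hKi : (0:ℝ) ≤ (Ki D 0 : ℝ) := Nat.cast_nonneg _
    nlinarith
  · have hlowval : (low D i : ℝ) = (D : ℝ) ^ i := by
      unfold low
      rw [if_neg (by omega)]
      push_cast
      ring
    have hKival : (Ki D i : ℝ) = (D : ℝ) * (D : ℝ) ^ i := by
      unfold Ki
      push_cast
      ring
    rw [hlowval, hKival]
    have hD0 : (0:ℝ) ≤ (D : ℝ) ^ i := by positivity
    nlinarith [mul_le_mul_of_nonneg_right hcD hD0]

end S17


/-- GIR lower bound `c + 1` for Round-Robin: for every `ε > 0`
there is an instance and a coalition of size `c` whose every member gains at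
least a factor `c + 1 − ε`. -/
theorem stmt17 (c : ℕ) (hc : 1 ≤ c) (ε : ℝ) (hε : 0 < ε) :
    ∃ (n m : ℕ) (hn : 0 < n) (v : Fin n → Fin m → ℝ)
      (pref pref' : Fin n → List (Fin m)) (C : Finset (Fin n)),
      (∀ a g, 0 ≤ v a g) ∧
      (∀ a, IsOrder (pref a)) ∧ (∀ a, IsOrder (pref' a)) ∧
      (∀ a, Consistent (v a) (pref a)) ∧
      C.card = c ∧ (∀ a ∉ C, pref' a = pref a) ∧
      ∀ a ∈ C,
        0 < (∑ g ∈ rr n hn pref a, v a g) ∧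
        ((c : ℝ) + 1 - ε) * (∑ g ∈ rr n hn pref a, v a g) ≤
          ∑ g ∈ rr n hn pref' a, v a g := by
  obtain ⟨D, hD, hcD⟩ : ∃ D : ℕ, 2 ≤ D ∧ (c : ℝ) ≤ ε * D := by
    refine ⟨max 2 ⌈(c : ℝ) / ε⌉₊, le_max_left _ _, ?_⟩
    have h1 : ((c : ℝ) / ε) ≤ (⌈(c : ℝ) / ε⌉₊ : ℝ) := Nat.le_ceil _
    have h2 : ((⌈(c : ℝ) / ε⌉₊ : ℕ) : ℝ) ≤ ((max 2 ⌈(c : ℝ) / ε⌉₊ : ℕ) : ℝ) := by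
      exact_mod_cast le_max_right _ _
    have h3 : ((c : ℝ) / ε) ≤ ((max 2 ⌈(c : ℝ) / ε⌉₊ : ℕ) : ℝ) := le_trans h1 h2
    calc (c : ℝ) = ((c : ℝ) / ε) * ε := by field_simp
    _ ≤ ((max 2 ⌈(c : ℝ) / ε⌉₊ : ℕ) : ℝ) * ε := by
        exact mul_le_mul_of_nonneg_right h3 (le_of_lt hε)
    _ = ε * ((max 2 ⌈(c : ℝ) / ε⌉₊ : ℕ) : ℝ) := by ring
  refine ⟨S17.nn c D, S17.mm c D, S17.nn_pos hc, S17.vv c D, S17.prefT c D hc hD,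
    S17.prefM c D hc hD, Finset.univ.filter (fun a => a.val < c),
    ?_, ?_, ?_, ?_, ?_, ?_, ?_⟩
  · exact fun a g => S17.vv_nonneg a g
  · exact fun a => S17.isOrder_prefT hc hD a
  · exact fun a => S17.isOrder_prefM hc hD a
  · exact fun a => S17.consistent_all hc hD a
  · -- coalition size
    have hcnn : c ≤ S17.nn c D := Nat.le_add_right c _
    refine Finset.card_eq_of_bijective
      (fun i hi => (⟨i, lt_of_lt_of_le hi hcnn⟩ : Fin (S17.nn c D))) ?_ ?_ ?_
    · intro a ha
      have : a.val < c := (Finset.mem_filter.mp ha).2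
      exact ⟨a.val, this, Fin.ext rfl⟩
    · intro i hi
      exact Finset.mem_filter.mpr ⟨Finset.mem_univ _, hi⟩
    · intro i j hi hj h
      simpa using congrArg Fin.val h
  · intro a ha
    have : ¬ a.val < c := fun h => ha (Finset.mem_filter.mpr ⟨Finset.mem_univ _, h⟩)
    exact S17.prefM_eq_prefT_honest hc hD this
  · intro a ha
    have hac : a.val < c := (Finset.mem_filter.mp ha).2
    constructor
    · rw [S17.sum_T hc hD hac]
      exact_mod_cast S17.Ki_pos hD a.val
    · rw [S17.sum_T hc hD hac]
      calc ((c : ℝ) + 1 - ε) * (S17.Ki D a.val : ℝ)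
          ≤ (S17.mu c D a.val : ℝ) := S17.ratio_ineq hc hD hε hcD hac
      _ ≤ _ := S17.sum_M hc hD hac
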